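/- For every integer n ≥ 1 and every Stirling permutation σ ∈ Q_n, the map Φ preserves the number of ascents: asc(σ) = asc(Φ(σ)), where asc of a sequence τ(1)⋯τ(2n) is the number of indices i ∈ [2n] with τ(i−1) < τ(i), with the convention τ(0) = 0. -/
import Mathlib


/-- A Stirling permutation of order n, modeled as a function σ : ℕ → ℕ supported on
positions 1,…,2n: every value 1 ≤ j ≤ n occurs exactly twice, and all entries between
the two occurrences of j are larger than j. -/
def IsStirlingPerm (n : ℕ) (σ : ℕ → ℕ) : Prop :=
  (∀ i : ℕ, i = 0 ∨ 2*n < i → σ i = 0) ∧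
  (∀ i : ℕ, 1 ≤ i → i ≤ 2*n → 1 ≤ σ i ∧ σ i ≤ n) ∧
  (∀ j : ℕ, 1 ≤ j → j ≤ n → ((Finset.Icc 1 (2*n)).filter (fun i => σ i = j)).card = 2) ∧
  (∀ i j k : ℕ, 1 ≤ i → i < j → j < k → k ≤ 2*n → σ i = σ k → σ i < σ j)

open Classical in
/-- The map Φ sending a Stirling permutation σ of order n to the permutation of [2n]
obtained by replacing the first occurrence of each value j by 2j and the second
occurrence by 2j - 1. -/
noncomputable def Phi (n : ℕ) (σ : ℕ → ℕ) : ℕ → ℕ := fun i =>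
  if 1 ≤ i ∧ i ≤ 2*n then
    (if ∀ i' : ℕ, 1 ≤ i' → i' < i → σ i' ≠ σ i then 2 * σ i else 2 * σ i - 1)
  else 0

/-- The number of ascents of a sequence τ at positions 1,…,2n: the number of indices
i ∈ [2n] with τ(i-1) < τ(i), where τ(0) = 0. -/
def ascSeq (n : ℕ) (τ : ℕ → ℕ) : ℕ :=
  ((Finset.Icc 1 (2*n)).filter (fun i => τ (i-1) < τ i)).card

/-- For n ≥ 1 and every Stirling permutation σ of order n, Φ preserves the number of
ascents: asc(σ) = asc(Φ(σ)). -/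
theorem stmt14 (n : ℕ) (hn : 1 ≤ n) (σ : ℕ → ℕ) (hσ : IsStirlingPerm n σ) :
    ascSeq n σ = ascSeq n (Phi n σ) := by
  classical
  obtain ⟨h0, hrange, -, -⟩ := hσ
  unfold ascSeq
  congr 1
  apply Finset.filter_congr
  intro i hi
  simp only [Finset.mem_Icc] at hi
  obtain ⟨hi1, hi2⟩ := hi
  have hσi := hrange i hi1 hi2
  rcases Nat.lt_or_ge i 2 with h2 | h2
  · -- i = 1
    interval_cases i
    have hσ0 : σ 0 = 0 := h0 0 (Or.inl rfl)
    have hP0 : Phi n σ 0 = 0 := by simp [Phi]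
    have hP1 : 1 ≤ Phi n σ 1 := by
      unfold Phi
      rw [if_pos ⟨le_refl 1, by omega⟩]
      split <;> omega
    simp only [Nat.sub_self, hσ0, hP0]
    constructor <;> intro _ <;> omega
  · -- i ≥ 2
    have hprev := hrange (i-1) (by omega) (by omega)
    have e1 : Phi n σ (i-1) =
        if ∀ i' : ℕ, 1 ≤ i' → i' < i-1 → σ i' ≠ σ (i-1) then 2 * σ (i-1)
        else 2 * σ (i-1) - 1 := by
      unfold Phi; rw [if_pos ⟨by omega, by omega⟩]
    have e2 : Phi n σ i =
        if ∀ i' : ℕ, 1 ≤ i' → i' < i → σ i' ≠ σ i then 2 * σ i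
        else 2 * σ i - 1 := by
      unfold Phi; rw [if_pos ⟨by omega, by omega⟩]
    constructor
    · intro hab
      rw [e1, e2]
      split <;> split <;> omega
    · intro hab
      by_contra hno
      push_neg at hno
      rcases Nat.lt_or_ge (σ i) (σ (i-1)) with hlt | hge
      · rw [e1, e2] at hab
        revert hab; split <;> split <;> omega
      · have heq : σ (i-1) = σ i := by omega
        have hcond : ¬ (∀ i' : ℕ, 1 ≤ i' → i' < i → σ i' ≠ σ i) := by
          intro h; exact h (i-1) (by omega) (by omega) heq
        rw [e1, e2, if_neg hcond] at hab
        revert hab; split <;> omega
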